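/- Let U ⊆ ℂ² be a bounded open set and let (W_n) be a sequence of open subsets of U with 0 ∈ W_n for all n, and let W = ker((W_n)) be the kernel of the sequence. Then for every p = (p₁, p₂) ∈ W, liminf_{n→∞} η_{W_n}(p) ≥ η_W(p). (This is Proposition 1.5 of the paper for the nonsingular horizontal foliation of ℂ² restricted to U.) -/

import Mathlib

open Filter Metric Topology Set

/-- The kernel of a sequence of open sets: the union over `n` of the connected
component containing `0` of the interior of `⋂ k ≥ n, W k`. -/
def seqKernel {X : Type*} [TopologicalSpace X] [Zero X] (W : ℕ → Set X) : Set X :=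
  ⋃ n, connectedComponentIn (interior (⋂ k, ⋂ (_ : n ≤ k), W k)) 0

/-- The modulus-of-uniformization function (Euclidean metric) of the restriction
to `V ⊆ ℂ²` of the horizontal foliation of `ℂ²`: the supremum of `|g'(0)|` over
holomorphic maps `g : 𝔻 → ℂ` with `g 0 = p₁` and `(g z, p₂) ∈ V` for `z ∈ 𝔻`
(with `sSup ∅ = 0`). -/
noncomputable def eta2 (V : Set (ℂ × ℂ)) (p : ℂ × ℂ) : ℝ :=
  sSup {r : ℝ | ∃ g : ℂ → ℂ, DifferentiableOn ℂ g (ball (0 : ℂ) 1) ∧ g 0 = p.1 ∧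
    (∀ z ∈ ball (0 : ℂ) 1, (g z, p.2) ∈ V) ∧ r = ‖deriv g 0‖}

/-- Uniform bound on the defining set of `eta2`. -/
lemma eta2_set_bound {V : Set (ℂ × ℂ)} {p : ℂ × ℂ} {R : ℝ} (hR : 0 ≤ R)
    (hV : V ⊆ closedBall 0 R) {r : ℝ}
    (hr : r ∈ {r : ℝ | ∃ g : ℂ → ℂ, DifferentiableOn ℂ g (ball (0 : ℂ) 1) ∧ g 0 = p.1 ∧
      (∀ z ∈ ball (0 : ℂ) 1, (g z, p.2) ∈ V) ∧ r = ‖deriv g 0‖}) :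
    r ≤ 2 * R + 1 := by
  obtain ⟨g, hg1, hg2, hg3, rfl⟩ := hr
  have hnorm : ∀ z ∈ ball (0 : ℂ) 1, ‖g z‖ ≤ R := by
    intro z hz
    have := hV (hg3 z hz)
    simp only [mem_closedBall, dist_zero_right] at this
    exact le_trans (norm_fst_le ((g z, p.2) : ℂ × ℂ)) this
  have hmaps : MapsTo g (ball (0 : ℂ) 1) (ball (g 0) (2 * R + 1)) := by
    intro z hz
    have h0 : (0 : ℂ) ∈ ball (0 : ℂ) 1 := by simp
    have : ‖g z - g 0‖ ≤ 2 * R := by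
      calc ‖g z - g 0‖ ≤ ‖g z‖ + ‖g 0‖ := norm_sub_le _ _
        _ ≤ R + R := add_le_add (hnorm z hz) (hnorm 0 h0)
        _ = 2 * R := by ring
    simp only [mem_ball, dist_eq_norm]
    linarith
  have := Complex.norm_deriv_le_div_of_mapsTo_ball hg1 (hmaps.mono_right ball_subset_closedBall) one_pos
  simpa using this

/-- Proposition 1.5 for the horizontal foliation of `ℂ²` restricted to a bounded
open set `U`: if `W₀` is the kernel of the sequence `(W n)` of open subsets of
`U`, then `liminf η_{W n} p ≥ η_{W₀} p` for all `p ∈ W₀`. -/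
theorem eta2_kernel_le_liminf (U : Set (ℂ × ℂ)) (hUopen : IsOpen U)
    (hUbdd : Bornology.IsBounded U)
    (W : ℕ → Set (ℂ × ℂ)) (hWopen : ∀ n, IsOpen (W n)) (hWU : ∀ n, W n ⊆ U)
    (h0 : ∀ n, (0 : ℂ × ℂ) ∈ W n) :
    ∀ p ∈ seqKernel W, eta2 (seqKernel W) p ≤ liminf (fun n => eta2 (W n) p) atTop := by
  intro p hp
  obtain ⟨R₀, hR₀⟩ := hUbdd.subset_closedBall 0
  set R : ℝ := max R₀ 0 with hRdef
  have hR : 0 ≤ R := le_max_right _ _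
  have hUR : U ⊆ closedBall 0 R :=
    hR₀.trans (closedBall_subset_closedBall (le_max_left _ _))
  set B : ℝ := 2 * R + 1 with hBdef
  -- the component sets
  set V : ℕ → Set (ℂ × ℂ) :=
    fun n => connectedComponentIn (interior (⋂ k, ⋂ (_ : n ≤ k), W k)) 0 with hVdef
  have hVopen : ∀ n, IsOpen (V n) := fun n => isOpen_interior.connectedComponentIn
  have hVmono : Monotone V := by
    intro n m hnm
    apply connectedComponentIn_mono
    apply interior_mono
    exact Set.iInter₂_mono' fun k hk => ⟨k, le_trans hnm hk, subset_rfl⟩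
  have hVsubW : ∀ n k, n ≤ k → V n ⊆ W k := by
    intro n k hk
    refine (connectedComponentIn_subset _ _).trans (interior_subset.trans ?_)
    exact Set.iInter₂_subset k hk
  -- coboundedness
  have hbound : ∀ n, eta2 (W n) p ≤ B := by
    intro n
    rcases Set.eq_empty_or_nonempty {r : ℝ | ∃ g : ℂ → ℂ,
        DifferentiableOn ℂ g (ball (0 : ℂ) 1) ∧ g 0 = p.1 ∧
        (∀ z ∈ ball (0 : ℂ) 1, (g z, p.2) ∈ W n) ∧ r = ‖deriv g 0‖} with he | hne
    · rw [eta2, he, Real.sSup_empty]; positivity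
    · exact csSup_le hne fun r hr => eta2_set_bound hR ((hWU n).trans hUR) hr
  have hcob : IsCoboundedUnder (· ≥ ·) atTop (fun n => eta2 (W n) p) :=
    isCoboundedUnder_ge_of_le atTop hbound
  -- main estimate
  have hKsub : seqKernel W ⊆ closedBall 0 R := by
    refine Set.iUnion_subset fun n => (hVsubW n n le_rfl).trans ((hWU n).trans hUR)
  refine csSup_le ⟨0, ⟨fun _ => p.1, differentiableOn_const _, rfl,
    fun z _ => by simpa using hp, by simp⟩⟩ ?_
  rintro r ⟨g, hg1, hg2, hg3, rfl⟩
  set a : ℝ := ‖deriv g 0‖ with hadef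
  -- for each ρ ∈ (0,1), ρ * a ≤ liminf
  have key : ∀ ρ : ℝ, 0 < ρ → ρ < 1 → ρ * a ≤ liminf (fun n => eta2 (W n) p) atTop := by
    intro ρ hρ0 hρ1
    -- compact image
    have hsub : closedBall (0 : ℂ) ρ ⊆ ball 0 1 := closedBall_subset_ball hρ1
    have hKcomp : IsCompact ((fun z => (g z, p.2)) '' closedBall (0 : ℂ) ρ) := by
      apply (isCompact_closedBall _ _).image_of_continuousOn
      exact ((hg1.continuousOn.mono hsub).prodMk continuousOn_const)
    have hKcov : ((fun z => (g z, p.2)) '' closedBall (0 : ℂ) ρ) ⊆ ⋃ n, V n := by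
      rintro _ ⟨z, hz, rfl⟩
      exact hg3 z (hsub hz)
    obtain ⟨N, hN⟩ := hKcomp.elim_directed_cover V hVopen hKcov hVmono.directed_le
    apply le_liminf_of_le hcob
    filter_upwards [eventually_ge_atTop N] with k hk
    -- candidate g_ρ
    set gρ : ℂ → ℂ := fun z => g ((ρ : ℂ) * z) with hgρ
    have hmaps : MapsTo (fun z : ℂ => (ρ : ℂ) * z) (ball 0 1) (ball (0:ℂ) 1) := by
      intro z hz
      simp only [mem_ball, dist_zero_right] at hz ⊢
      rw [norm_mul, Complex.norm_real, Real.norm_of_nonneg hρ0.le]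
      nlinarith
    have hd : DifferentiableOn ℂ gρ (ball (0 : ℂ) 1) :=
      hg1.comp ((differentiable_const _ |>.mul differentiable_id).differentiableOn) hmaps
    have hval : ∀ z ∈ ball (0 : ℂ) 1, (gρ z, p.2) ∈ W k := by
      intro z hz
      apply hVsubW N k hk
      apply hN
      refine ⟨(ρ : ℂ) * z, ?_, rfl⟩
      simp only [mem_closedBall, dist_zero_right] at hz ⊢
      rw [norm_mul, Complex.norm_real, Real.norm_of_nonneg hρ0.le]
      simp only [mem_ball, dist_zero_right] at hz
      nlinarith
    have hderiv : deriv gρ 0 = deriv g 0 * ρ := by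
      have hga : DifferentiableAt ℂ g 0 :=
        hg1.differentiableAt (isOpen_ball.mem_nhds (mem_ball_self one_pos))
      have heq : gρ = g ∘ (fun z : ℂ => (ρ : ℂ) * z) := rfl
      rw [heq, deriv_comp 0 (by simpa using hga)
        ((differentiableAt_const _).mul differentiableAt_id)]
      have : deriv (fun z : ℂ => (ρ : ℂ) * z) 0 = (ρ : ℂ) := by
        simpa using ((hasDerivAt_id (0 : ℂ)).const_mul (ρ : ℂ)).deriv
      simp [this]
    apply le_csSup ⟨B, fun r hr => eta2_set_bound hR ((hWU k).trans hUR) hr⟩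
    refine ⟨gρ, hd, by rw [hgρ]; simp [hg2], hval, ?_⟩
    rw [hderiv, norm_mul]
    simp [hadef, mul_comm, abs_of_pos hρ0]
  -- pass to the limit ρ → 1⁻
  have htend : Tendsto (fun ρ : ℝ => ρ * a) (𝓝[<] (1 : ℝ)) (𝓝 a) := by
    have : Tendsto (fun ρ : ℝ => ρ * a) (𝓝 (1 : ℝ)) (𝓝 (1 * a)) :=
      (continuous_id.mul continuous_const).tendsto 1
    simpa using this.mono_left nhdsWithin_le_nhds
  refine le_of_tendsto htend ?_
  filter_upwards [Ioo_mem_nhdsLT_of_mem (by constructor <;> norm_num :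
    (1:ℝ) ∈ Ioc (0:ℝ) 1)] with ρ hρ
  exact key ρ hρ.1 hρ.2
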